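/- The operator Y_{12}(u) = [(b-u)(c - u·t) + c·u·e] / [(b+u)(c+u)], defined via the Brauer algebra with t^2 = 1, e·t = t·e = e, e^2 = τ·e, τ = 2(1 + b/c), satisfies the unitarity relation Y_{12}(u) Y_{21}(-u) = 1. -/

import Mathlib

/-- Unitarity of the rational (Brauer algebra valued) Yang–Baxter operator:
with `t² = 1`, `e t = t e = e`, `e² = τ e`, `τ = 2(1 + b/c)`, the operator
`Y(u) = [(b-u)(c·1 - u·t) + c u e] / [(b+u)(c+u)]` satisfies `Y(u) Y(-u) = 1`. -/
theorem brauer_Y_unitarity {F : Type*} [Field F] [CharZero F]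
    {R : Type*} [Ring R] [Algebra F R]
    (b c u : F) (hb : b ≠ 0) (hc : c ≠ 0)
    (hden : (b + u) * (c + u) ≠ 0) (hden' : (b - u) * (c - u) ≠ 0)
    (t e : R)
    (ht : t * t = 1) (het : e * t = e) (hte : t * e = e)
    (hee : e * e = (2 * (1 + b / c)) • e)
    (Y : F → R)
    (hY : ∀ x : F, Y x =
      ((b + x) * (c + x))⁻¹ • ((b - x) • (c • (1 : R) - x • t) + (c * x) • e)) :
    Y u * Y (-u) = 1 := by
  rw [hY u, hY (-u)]
  have h1 : b + -u = b - u := by ring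
  have h2 : c + -u = c - u := by ring
  have h3 : b - -u = b + u := by ring
  rw [h1, h2, h3, smul_mul_smul_comm]
  have key : ((b - u) • (c • (1 : R) - u • t) + (c * u) • e) *
      ((b + u) • (c • (1 : R) - (-u) • t) + (c * (-u)) • e)
      = (((b + u) * (c + u)) * ((b - u) * (c - u))) • (1 : R) := by
    simp only [mul_add, add_mul, sub_mul, mul_sub, smul_mul_smul_comm,
      smul_mul_assoc, mul_smul_comm, ht, het, hte, hee, one_mul, mul_one,
      smul_smul]
    match_scalars <;> field_simp <;> ring
  rw [key, smul_smul]
  have hs : ((b + u) * (c + u))⁻¹ * ((b - u) * (c - u))⁻¹ * ((b + u) * (c + u) * ((b - u) * (c - u))) = 1 := by rw [← mul_inv, inv_mul_cancel₀ (mul_ne_zero hden hden')]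
  rw [hs, one_smul]
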